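/- Let (u_t, v_t) solve the gradient flow d/dt(u_t,v_t) = −∇F(u_t,v_t) with F(u,v) = L(u⊙v) for differentiable L, with initialization u_0 = √2·α·𝟏 and v_0 = 0 for some α > 0. Then for all t ≥ 0 and all coordinates i, u_t[i] > |v_t[i]| ≥ 0. In particular u_t[i] can be expressed as u_t[i] = √(α² + √(β_t[i]² + α⁴)) where β_t = u_t ⊙ v_t. -/

import Mathlib

open scoped BigOperators

theorem stmt4 {d : ℕ} (L : (Fin d → ℝ) → ℝ) (gL : (Fin d → ℝ) → (Fin d → ℝ))
    (hdiff : Differentiable ℝ L)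
    (hgrad : ∀ w v, (fderiv ℝ L w) v = ∑ i, gL w i * v i)
    (α : ℝ) (hα : 0 < α) (u v : ℝ → Fin d → ℝ)
    (hu0 : u 0 = fun _ => Real.sqrt 2 * α) (hv0 : v 0 = 0)
    (hu : ∀ t i, HasDerivAt (fun s => u s i)
      (-(gL (fun j => u t j * v t j) i * v t i)) t)
    (hv : ∀ t i, HasDerivAt (fun s => v s i)
      (-(gL (fun j => u t j * v t j) i * u t i)) t) :
    ∀ t ≥ (0:ℝ), ∀ i, |v t i| < u t i ∧
      u t i = Real.sqrt (α ^ 2 + Real.sqrt ((u t i * v t i) ^ 2 + α ^ 4)) := by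
  have key : ∀ i t, u t i ^ 2 - v t i ^ 2 = 2 * α ^ 2 := by
    intro i t
    have hd : ∀ s : ℝ, HasDerivAt (fun s => u s i ^ 2 - v s i ^ 2) 0 s := by
      intro s
      have h1 := ((hu s i).pow 2).sub ((hv s i).pow 2)
      exact h1.congr_deriv (by norm_num; ring)
    have hconst := is_const_of_deriv_eq_zero
      (f := fun s => u s i ^ 2 - v s i ^ 2)
      (fun s => (hd s).differentiableAt) (fun s => (hd s).deriv) t 0
    have h0 : u 0 i = Real.sqrt 2 * α := by rw [hu0]
    have hv0' : v 0 i = 0 := by rw [hv0]; rfl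
    rw [hconst, h0, hv0']
    have : Real.sqrt 2 ^ 2 = 2 := Real.sq_sqrt (by norm_num)
    nlinarith [this]
  have hne : ∀ i t, u t i ≠ 0 := by
    intro i t h
    have := key i t
    nlinarith [sq_nonneg (v t i), sq_nonneg α]
  have hpos : ∀ t ≥ (0:ℝ), ∀ i, 0 < u t i := by
    intro t ht i
    by_contra h
    push_neg at h
    have hlt : u t i < 0 := lt_of_le_of_ne h (hne i t)
    have h0 : 0 < u 0 i := by
      rw [hu0]
      positivity
    have hcont : ContinuousOn (fun s => u s i) (Set.Icc 0 t) :=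
      (fun s _ => ((hu s i).differentiableAt.continuousAt.continuousWithinAt))
    have := intermediate_value_Icc' ht hcont
    have hmem : (0:ℝ) ∈ Set.Icc (u t i) (u 0 i) := ⟨le_of_lt hlt, le_of_lt h0⟩
    obtain ⟨s, _, hs⟩ := this hmem
    exact hne i s hs
  intro t ht i
  have hk := key i t
  have hu_pos := hpos t ht i
  constructor
  · have hsq : v t i ^ 2 < u t i ^ 2 := by nlinarith
    nlinarith [sq_abs (v t i), abs_nonneg (v t i)]
  · have h1 : (u t i * v t i) ^ 2 + α ^ 4 = (u t i ^ 2 - α ^ 2) ^ 2 := by nlinarith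
    rw [h1, Real.sqrt_sq (by nlinarith [sq_nonneg (v t i)])]
    have h2 : α ^ 2 + (u t i ^ 2 - α ^ 2) = u t i ^ 2 := by ring
    rw [h2, Real.sqrt_sq hu_pos.le]
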